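/- Let S = {v₁, …, vₙ} be a finite nonempty set of points in ℝ^m and let p ∈ ℝ^m with p ∉ S. Then p ∈ conv(S) if and only if for every p' ∈ conv(S) with p' ≠ p there exists v ∈ S with ⟨p' − p, v − p⟩ ≤ 0 (i.e., the angle ∠p'pv is at least π/2; such a v is a strict pivot). -/

import Mathlib

open RealInnerProductSpace

/-- **Strict Distance Duality.** Assume `p ∉ S`. Then `p ∈ conv(S)` iff every
`p' ∈ conv(S)` with `p' ≠ p` admits a strict pivot, i.e. a point `v ∈ S` with
`⟨p' - p, v - p⟩ ≤ 0` (the angle `∠ p' p v` is at least `π/2`). -/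
theorem strict_distance_duality {m : ℕ} (S : Finset (EuclideanSpace ℝ (Fin m)))
    (hS : S.Nonempty) (p : EuclideanSpace ℝ (Fin m)) (hp : p ∉ S) :
    p ∈ convexHull ℝ (S : Set (EuclideanSpace ℝ (Fin m))) ↔
      ∀ p' ∈ convexHull ℝ (S : Set (EuclideanSpace ℝ (Fin m))), p' ≠ p →
        ∃ v ∈ S, ⟪p' - p, v - p⟫ ≤ (0 : ℝ) := by
  constructor
  · intro hpc p' hp' _
    by_contra hno
    push_neg at hno
    have hsub : (S : Set (EuclideanSpace ℝ (Fin m))) ⊆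
        {x | ⟪p' - p, p⟫ < ⟪p' - p, x⟫} := by
      intro v hv
      have := hno v hv
      rw [inner_sub_right] at this
      simpa using this
    have hconv : Convex ℝ {x : EuclideanSpace ℝ (Fin m) | ⟪p' - p, p⟫ < ⟪p' - p, x⟫} := by
      intro x hx y hy a b ha hb hab
      simp only [Set.mem_setOf_eq] at *
      rw [inner_add_right, real_inner_smul_right, real_inner_smul_right]
      have hr : a * ⟪p' - p, p⟫ + b * ⟪p' - p, p⟫ = ⟪p' - p, p⟫ := by
        rw [← add_mul, hab, one_mul]
      rcases ha.lt_or_eq with ha' | ha'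
      · nlinarith [mul_lt_mul_of_pos_left hx ha', mul_le_mul_of_nonneg_left hy.le hb]
      · nlinarith [mul_lt_mul_of_pos_left hy (by linarith : (0:ℝ) < b),
          mul_le_mul_of_nonneg_left hx.le ha]
    have hmem := convexHull_min hsub hconv hpc
    rw [Set.mem_setOf_eq] at hmem
    exact lt_irrefl _ hmem
  · intro h
    by_contra hpc
    set K := convexHull ℝ (S : Set (EuclideanSpace ℝ (Fin m))) with hK
    have hKconv : Convex ℝ K := convex_convexHull _ _
    have hKcompact : IsCompact K := S.finite_toSet.isCompact_convexHull (𝕜 := ℝ)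
    have hKcomplete : IsComplete K := hKcompact.isClosed.isComplete
    have hKne : K.Nonempty := hS.to_set.mono (subset_convexHull ℝ _)
    obtain ⟨p', hp'K, hmin⟩ := exists_norm_eq_iInf_of_complete_convex hKne hKcomplete hKconv p
    have hchar := (norm_eq_iInf_iff_real_inner_le_zero hKconv hp'K).mp hmin
    have hne : p' ≠ p := fun h' => hpc (h' ▸ hp'K)
    obtain ⟨v, hvS, hvle⟩ := h p' hp'K hne
    have hvK : v ∈ K := subset_convexHull ℝ _ hvS
    have h1 : ⟪p - p', v - p'⟫ ≤ (0 : ℝ) := hchar v hvK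
    have h2 : ⟪p' - p, v - p⟫ = -⟪p - p', v - p'⟫ + ‖p' - p‖ ^ 2 := by
      simp only [← real_inner_self_eq_norm_sq, inner_sub_left, inner_sub_right]
      linarith [real_inner_comm p p', real_inner_comm p v, real_inner_comm p' v]
    have hpos : (0 : ℝ) < ‖p' - p‖ ^ 2 := pow_pos (norm_sub_pos_iff.mpr hne) 2
    linarith
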